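/- For a natural number n ≥ 2, the real number ((√n)^(√n))^(√n) = n^(n/2) is rational if and only if n is even or n is a perfect square. -/

import Mathlib

theorem stmt4 (n : ℕ) (hn : 2 ≤ n) :
    (∃ q : ℚ, ((Real.sqrt n) ^ (Real.sqrt n : ℝ)) ^ (Real.sqrt n : ℝ) = (q : ℝ)) ↔
      Even n ∨ ∃ k : ℕ, n = k ^ 2 := by
  have hs : (0:ℝ) ≤ Real.sqrt n := Real.sqrt_nonneg _
  have key : ((Real.sqrt n) ^ (Real.sqrt n : ℝ)) ^ (Real.sqrt n : ℝ)
      = (Real.sqrt n) ^ (n : ℕ) := by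
    rw [← Real.rpow_natCast (Real.sqrt n) n, ← Real.rpow_mul hs,
      Real.mul_self_sqrt (by positivity)]
  rw [key]
  constructor
  · rintro ⟨q, hq⟩
    by_contra h
    push_neg at h
    obtain ⟨hodd, hsq⟩ := h
    have hirr : Irrational (Real.sqrt n) := by
      rw [irrational_sqrt_natCast_iff]
      rintro ⟨k, hk⟩
      exact hsq k (by rw [hk, sq])
    rw [Nat.not_even_iff_odd] at hodd
    obtain ⟨m, hm⟩ := hodd
    have : (Real.sqrt n) ^ n = (n:ℝ) ^ m * Real.sqrt n := by
      rw [hm, pow_succ, pow_mul, Real.sq_sqrt (by positivity)]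
    rw [this] at hq
    have hn0 : ((n:ℝ) ^ m : ℝ) ≠ 0 := by positivity
    have : Irrational ((n:ℝ) ^ m * Real.sqrt n) := by
      have := hirr.ratCast_mul (q := (n:ℚ)^m) (by positivity)
      simpa using this
    exact this ⟨q, hq.symm⟩
  · rintro (⟨m, hm⟩ | ⟨k, hk⟩)
    · refine ⟨(n:ℚ) ^ m, ?_⟩
      have : n = 2 * m := by omega
      rw [this, pow_mul, Real.sq_sqrt (by positivity)]
      push_cast
      ring
    · refine ⟨(k:ℚ) ^ n, ?_⟩
      rw [hk]
      push_cast
      rw [Real.sqrt_sq (by positivity)]
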